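/- Existence of resistant hyperplanes: Let S₁, …, S_{d+1} be pairwise disjoint nonempty subsets of [n] with {x_i : i ∈ S_t} well separable in ℝᵈ, and fix y ∈ ℝⁿ. For every vector k with k_t ∈ [|S_t|], there exists an affine function β : ℝᵈ → ℝ such that the k_t-th smallest residual among {y_i − β(x_i) : i ∈ S_t} is zero for all t ∈ [d+1]. -/

import Mathlib

/-- Evaluation of the affine function `β(p) = ⟨β₁, p⟩ + β₀`. -/
def affEval {d : ℕ} (β : (Fin d → ℝ) × ℝ) (p : Fin d → ℝ) : ℝ :=
  (∑ j, β.1 j * p j) + β.2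

/-- The sets `X 0, …, X (m-1)` in `ℝᵈ` are well separable. -/
def WellSeparable {d m : ℕ} (X : Fin m → Set (Fin d → ℝ)) : Prop :=
  ∀ I J : Finset (Fin m), Disjoint I J →
    ∃ (w : Fin d → ℝ) (c : ℝ),
      (∀ t ∈ I, ∀ p ∈ X t, (∑ j, w j * p j) < c) ∧
      (∀ t ∈ J, ∀ p ∈ X t, c < (∑ j, w j * p j))

/-- The `k`-th smallest value of the multiset `{r i : i ∈ s}` (1-indexed). -/
noncomputable def kthSmallest {n : ℕ} (s : Finset (Fin n)) (r : Fin n → ℝ) (k : ℕ) : ℝ :=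
  (Multiset.sort (s.val.map r) (· ≤ ·)).getD (k - 1) 0

section ListLemmas

lemma sorted_getElem_mono {l : List ℝ} (hl : l.Pairwise (· ≤ ·)) {i j : ℕ}
    (hi : i < l.length) (hj : j < l.length) (hij : i ≤ j) : l[i] ≤ l[j] := by
  rcases eq_or_lt_of_le hij with h | h
  · subst h; rfl
  · exact List.pairwise_iff_getElem.mp hl i j hi hj h

lemma claimA {l : List ℝ} (hl : l.Pairwise (· ≤ ·)) {j : ℕ} (hj : j < l.length)
    {p : ℝ → Bool} (hp : ∀ a b : ℝ, a ≤ b → p b = true → p a = true)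
    (h : p l[j] = true) : j + 1 ≤ l.countP p := by
  have hall : ∀ a ∈ l.take (j + 1), p a = true := by
    intro a ha
    obtain ⟨i, hi, rfl⟩ := List.mem_iff_getElem.mp ha
    rw [List.getElem_take]
    have hil : i < l.length := lt_of_lt_of_le hi (by simpa using List.length_take_le (j+1) l)
    have : i ≤ j := by
      have := hi
      rw [List.length_take] at this
      omega
    exact hp _ _ (sorted_getElem_mono hl hil hj this) h
  calc j + 1 = (l.take (j + 1)).length := by rw [List.length_take]; omega
    _ = (l.take (j + 1)).countP p := (List.countP_eq_length.mpr hall).symm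
    _ ≤ l.countP p := List.Sublist.countP_le (p := p) (List.take_sublist _ _)

lemma claimB {l : List ℝ} (hl : l.Pairwise (· ≤ ·)) {j : ℕ} (hj : j < l.length)
    {p : ℝ → Bool} (hp : ∀ a b : ℝ, a ≤ b → p b = true → p a = true)
    (h : ¬ p l[j] = true) : l.countP p ≤ j := by
  have hsplit : l.countP p = (l.take j).countP p + (l.drop j).countP p := by
    rw [← List.countP_append, List.take_append_drop]
  have h0 : (l.drop j).countP p = 0 := by
    rw [List.countP_eq_zero]
    intro a ha
    obtain ⟨i, hi, rfl⟩ := List.mem_iff_getElem.mp ha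
    rw [List.getElem_drop]
    have hji : j + i < l.length := by rw [List.length_drop] at hi; omega
    intro hpa
    exact h (hp _ _ (sorted_getElem_mono hl hj hji (Nat.le_add_right j i)) hpa)
  rw [hsplit, h0, Nat.add_zero]
  calc (l.take j).countP p ≤ (l.take j).length := List.countP_le_length (p := p)
    _ ≤ j := by rw [List.length_take]; omega

lemma countP_sort {n : ℕ} (s : Finset (Fin n)) (r : Fin n → ℝ) (p : ℝ → Prop) [DecidablePred p]
    [DecidablePred fun i => p (r i)] :
    (Multiset.sort (s.val.map r) (· ≤ ·)).countP (fun a => decide (p a))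
      = (s.filter (fun i => p (r i))).card := by
  rw [← Multiset.coe_countP, Multiset.sort_eq, Multiset.countP_map]
  rw [Finset.card, Finset.filter_val]
  congr! 

lemma length_sort_eq {n : ℕ} (s : Finset (Fin n)) (r : Fin n → ℝ) :
    (Multiset.sort (s.val.map r) (· ≤ ·)).length = s.card := by
  rw [Multiset.length_sort, Multiset.card_map]; rfl

lemma kth_eq_zero {n : ℕ} (s : Finset (Fin n)) (r : Fin n → ℝ) (k : ℕ)
    [DecidablePred fun i => r i < 0] [DecidablePred fun i => r i ≤ 0]
    (h1 : (s.filter (fun i => r i < 0)).card < k)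
    (h2 : k ≤ (s.filter (fun i => r i ≤ 0)).card) :
    kthSmallest s r k = 0 := by
  set l := Multiset.sort (s.val.map r) (· ≤ ·) with hldef
  have hsorted : l.Pairwise (· ≤ ·) := Multiset.pairwise_sort _ _
  have hlen : l.length = s.card := length_sort_eq s r
  have hks : k ≤ s.card := le_trans h2 (Finset.card_le_card (Finset.filter_subset _ _))
  have hk1 : 1 ≤ k := lt_of_le_of_lt (Nat.zero_le _) h1
  have hj : k - 1 < l.length := by omega
  unfold kthSmallest
  rw [← hldef, List.getD_eq_getElem l 0 hj]
  have e1 : l.countP (fun a => decide (a < 0)) = (s.filter (fun i => r i < 0)).card :=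
    countP_sort s r (fun a => a < 0)
  have e2 : l.countP (fun a => decide (a ≤ 0)) = (s.filter (fun i => r i ≤ 0)).card :=
    countP_sort s r (fun a => a ≤ 0)
  have hge : (0:ℝ) ≤ l[k-1] := by
    by_contra hcon
    push_neg at hcon
    have := claimA hsorted hj (p := fun a => decide (a < 0))
      (fun a b hab hb => by simp at *; linarith) (by simpa using hcon)
    omega
  have hle : l[k-1] ≤ (0:ℝ) := by
    by_contra hcon
    push_neg at hcon
    have := claimB hsorted hj (p := fun a => decide (a ≤ 0))
      (fun a b hab hb => by simp at *; linarith) (by simpa using not_le.mpr hcon)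
    omega
  linarith

lemma kth_lt_kth {n : ℕ} (s : Finset (Fin n)) (r r' : Fin n → ℝ) (k : ℕ)
    (hk1 : 1 ≤ k) (hk2 : k ≤ s.card)
    (h : ∀ i ∈ s, r i < r' i) : kthSmallest s r k < kthSmallest s r' k := by
  classical
  set l := Multiset.sort (s.val.map r) (· ≤ ·) with hldef
  set l' := Multiset.sort (s.val.map r') (· ≤ ·) with hl'def
  have hsorted : l.Pairwise (· ≤ ·) := Multiset.pairwise_sort _ _
  have hsorted' : l'.Pairwise (· ≤ ·) := Multiset.pairwise_sort _ _
  have hlen : l.length = s.card := length_sort_eq s r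
  have hlen' : l'.length = s.card := length_sort_eq s r'
  have hj : k - 1 < l.length := by omega
  have hj' : k - 1 < l'.length := by omega
  unfold kthSmallest
  rw [← hldef, ← hl'def, List.getD_eq_getElem l 0 hj, List.getD_eq_getElem l' 0 hj']
  set v := l'[k-1] with hv
  have hA : k - 1 + 1 ≤ l'.countP (fun a => decide (a ≤ v)) :=
    claimA hsorted' hj' (fun a b hab hb => by simp at *; linarith) (by simp [hv])
  have hsub : s.filter (fun i => r' i ≤ v) ⊆ s.filter (fun i => r i < v) := by
    intro i hi
    rw [Finset.mem_filter] at *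
    exact ⟨hi.1, lt_of_lt_of_le (h i hi.1) hi.2⟩
  have hcount : k - 1 + 1 ≤ l.countP (fun a => decide (a < v)) := by
    rw [countP_sort s r (fun a => a < v)]
    rw [countP_sort s r' (fun a => a ≤ v)] at hA
    exact le_trans hA (Finset.card_le_card hsub)
  by_contra hcon
  push_neg at hcon
  have := claimB hsorted hj (p := fun a => decide (a < v))
    (fun a b hab hb => by simp at *; linarith) (by simpa using not_lt.mpr hcon)
  omega

end ListLemmas

section AffineLemmas

lemma affEval_sub {d : ℕ} (β β' : (Fin d → ℝ) × ℝ) (p : Fin d → ℝ) :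
    affEval (β - β') p = affEval β p - affEval β' p := by
  simp only [affEval, Prod.fst_sub, Prod.snd_sub, Pi.sub_apply, sub_mul,
    Finset.sum_sub_distrib]
  ring

lemma sum_combo {d : ℕ} (w p q : Fin d → ℝ) (s : ℝ) :
    ∑ j, w j * ((1 - s) * p j + s * q j)
      = (1 - s) * (∑ j, w j * p j) + s * (∑ j, w j * q j) := by
  rw [Finset.mul_sum, Finset.mul_sum, ← Finset.sum_add_distrib]
  exact Finset.sum_congr rfl (fun j _ => by ring)

lemma affEval_combo {d : ℕ} (δ : (Fin d → ℝ) × ℝ) (p q : Fin d → ℝ) (s : ℝ) :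
    affEval δ (fun j => (1 - s) * p j + s * q j)
      = (1 - s) * affEval δ p + s * affEval δ q := by
  simp only [affEval, sum_combo]
  ring

lemma convex_lt {a b c s : ℝ} (h0 : 0 ≤ s) (h1 : s ≤ 1) (ha : a < c) (hb : b < c) :
    (1 - s) * a + s * b < c := by
  rcases lt_or_ge s 1 with hs | hs
  · nlinarith [mul_pos (sub_pos.mpr hs) (sub_pos.mpr ha), mul_nonneg h0 (sub_pos.mpr hb).le]
  · have hseq : s = 1 := le_antisymm h1 hs
    subst hseq; simpa using hb

lemma convex_gt {a b c s : ℝ} (h0 : 0 ≤ s) (h1 : s ≤ 1) (ha : c < a) (hb : c < b) :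
    c < (1 - s) * a + s * b := by
  have := convex_lt h0 h1 (neg_lt_neg ha) (neg_lt_neg hb)
  linarith

set_option maxHeartbeats 1000000 in
/-- Key lemma: if an affine function is weakly nonpositive somewhere and weakly
nonnegative somewhere on each of the `d+1` well-separable sets, it is zero. -/
lemma lemA {d n : ℕ} (x : Fin n → Fin d → ℝ) (S : Fin (d + 1) → Finset (Fin n))
    (hsep : WellSeparable (fun t => x '' ↑(S t))) (δ : (Fin d → ℝ) × ℝ)
    (h1 : ∀ t, ∃ i ∈ S t, affEval δ (x i) ≤ 0)
    (h2 : ∀ t, ∃ i ∈ S t, 0 ≤ affEval δ (x i)) : δ = 0 := by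
  classical
  by_contra hδ
  choose pi hpi hple using h1
  choose qi hqi hqge using h2
  set g : (Fin d → ℝ) → ℝ := fun u => affEval δ u with hg
  set p : Fin (d + 1) → Fin d → ℝ := fun t => x (pi t) with hp
  set q : Fin (d + 1) → Fin d → ℝ := fun t => x (qi t) with hq
  set sc : Fin (d + 1) → ℝ := fun t =>
    if g (q t) = g (p t) then 0 else (- g (p t)) / (g (q t) - g (p t)) with hsc
  have hscmem : ∀ t, 0 ≤ sc t ∧ sc t ≤ 1 := by
    intro t
    have h1t : g (p t) ≤ 0 := hple t
    have h2t : 0 ≤ g (q t) := hqge t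
    simp only [hsc]
    split_ifs with heq
    · norm_num
    · have hd : 0 < g (q t) - g (p t) := by
        rcases lt_or_eq_of_le (le_trans h1t h2t) with h | h
        · linarith
        · exact absurd h.symm heq
      constructor
      · apply div_nonneg <;> linarith
      · rw [div_le_one hd]; linarith
  set z : Fin (d + 1) → Fin d → ℝ := fun t j => (1 - sc t) * p t j + sc t * q t j with hz
  have hgz : ∀ t, g (z t) = 0 := by
    intro t
    have := affEval_combo δ (p t) (q t) (sc t)
    have hzt : g (z t) = (1 - sc t) * g (p t) + sc t * g (q t) := this
    rw [hzt]
    simp only [hsc]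
    split_ifs with heq
    · have h1t : g (p t) ≤ 0 := hple t
      have h2t : 0 ≤ g (q t) := hqge t
      have : g (p t) = 0 := le_antisymm h1t (heq ▸ h2t)
      rw [heq, this]; ring
    · have hd : g (q t) - g (p t) ≠ 0 := fun h => heq (by linarith)
      field_simp
      ring
  -- the linear functional associated to δ
  set L : ((Fin d → ℝ) × ℝ) →ₗ[ℝ] ℝ :=
    { toFun := fun u => (∑ j, δ.1 j * u.1 j) + δ.2 * u.2
      map_add' := by
        intro a b
        simp only [Prod.fst_add, Prod.snd_add, Pi.add_apply, mul_add,
          Finset.sum_add_distrib]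
        ring
      map_smul' := by
        intro c a
        simp only [Prod.smul_fst, Prod.smul_snd, Pi.smul_apply, smul_eq_mul,
          RingHom.id_apply]
        rw [mul_add, Finset.mul_sum]
        congr 1
        · exact Finset.sum_congr rfl (fun j _ => by ring)
        · ring } with hL
  have hLz : ∀ t, L (z t, 1) = 0 := by
    intro t
    have : L (z t, 1) = g (z t) := by simp [hL, hg, affEval]
    rw [this, hgz]
  have hLne : L ≠ 0 := by
    intro h0
    apply hδ
    have hc1 : ∀ j, δ.1 j = 0 := by
      intro j
      have := congrArg (fun f => f (Pi.single j 1, 0)) (congrArg DFunLike.coe h0)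
      simpa [hL, Pi.single_apply, mul_ite, Finset.sum_ite_eq'] using this
    have hc2 : δ.2 = 0 := by
      have := congrArg (fun f => f ((0 : Fin d → ℝ), 1)) (congrArg DFunLike.coe h0)
      simpa [hL] using this
    exact Prod.ext (funext hc1) hc2
  have hLsurj : Function.Surjective L := by
    obtain ⟨u, hu⟩ : ∃ u, L u ≠ 0 := by
      by_contra hcon
      push_neg at hcon
      exact hLne (LinearMap.ext fun u => by rw [hcon]; rfl)
    intro r
    refine ⟨(r / L u) • u, ?_⟩
    rw [map_smul, smul_eq_mul]
    field_simp
  have hker : Module.finrank ℝ (LinearMap.ker L) = d := by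
    have := LinearMap.finrank_range_add_finrank_ker L
    rw [LinearMap.range_eq_top.mpr hLsurj, finrank_top] at this
    simp [Module.finrank_prod, Module.finrank_pi, Module.finrank_self] at this
    omega
  set v : Fin (d + 1) → LinearMap.ker L := fun t =>
    ⟨(z t, 1), LinearMap.mem_ker.mpr (hLz t)⟩ with hv
  have hnli : ¬ LinearIndependent ℝ v := by
    intro hli
    have := hli.fintype_card_le_finrank
    rw [hker, Fintype.card_fin] at this
    omega
  rw [Fintype.not_linearIndependent_iff] at hnli
  obtain ⟨lam, hsum, t0, ht0⟩ := hnli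
  have hsum' : ∑ t, lam t • ((z t, 1) : (Fin d → ℝ) × ℝ) = 0 := by
    have := congrArg (Subtype.val) hsum
    rw [Submodule.coe_sum] at this
    simpa [hv] using this
  have hfst : ∑ t, lam t • z t = 0 := by
    have := congrArg Prod.fst hsum'
    simpa [Prod.fst_sum] using this
  have hzsum : ∀ j, ∑ t, lam t * z t j = 0 := by
    intro j
    have := congrFun hfst j
    simpa [Finset.sum_apply] using this
  have hlsum : ∑ t, lam t = 0 := by
    have := congrArg Prod.snd hsum'
    simpa [Prod.snd_sum] using this
  set I : Finset (Fin (d + 1)) := Finset.univ.filter (fun t => 0 < lam t) with hI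
  set J : Finset (Fin (d + 1)) := Finset.univ.filter (fun t => lam t < 0) with hJ
  have hIJ : Disjoint I J := by
    rw [Finset.disjoint_left]
    intro t h1t h2t
    rw [hI, Finset.mem_filter] at h1t
    rw [hJ, Finset.mem_filter] at h2t
    linarith [h1t.2, h2t.2]
  obtain ⟨w, c, hIsep, hJsep⟩ := hsep I J hIJ
  have hwz : ∀ t, (∑ j, w j * z t j)
      = (1 - sc t) * (∑ j, w j * p t j) + sc t * (∑ j, w j * q t j) := by
    intro t
    exact sum_combo w (p t) (q t) (sc t)
  have hIz : ∀ t ∈ I, (∑ j, w j * z t j) < c := by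
    intro t ht
    have hp' := hIsep t ht (p t) ⟨pi t, hpi t, rfl⟩
    have hq' := hIsep t ht (q t) ⟨qi t, hqi t, rfl⟩
    rw [hwz t]
    exact convex_lt (hscmem t).1 (hscmem t).2 hp' hq'
  have hJz : ∀ t ∈ J, c < (∑ j, w j * z t j) := by
    intro t ht
    have hp' := hJsep t ht (p t) ⟨pi t, hpi t, rfl⟩
    have hq' := hJsep t ht (q t) ⟨qi t, hqi t, rfl⟩
    rw [hwz t]
    exact convex_gt (hscmem t).1 (hscmem t).2 hp' hq'
  have hle : ∀ t, lam t * (∑ j, w j * z t j) ≤ lam t * c := by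
    intro t
    rcases lt_trichotomy (lam t) 0 with h | h | h
    · exact mul_le_mul_of_nonpos_left (hJz t (by rw [hJ]; simp [h])).le h.le
    · rw [h, zero_mul, zero_mul]
    · exact mul_le_mul_of_nonneg_left (hIz t (by rw [hI]; simp [h])).le h.le
  have hlt : lam t0 * (∑ j, w j * z t0 j) < lam t0 * c := by
    rcases lt_or_gt_of_ne ht0 with h | h
    · exact (mul_lt_mul_left_of_neg h).mpr (hJz t0 (by rw [hJ]; simp [h]))
    · exact (mul_lt_mul_iff_right₀ h).mpr (hIz t0 (by rw [hI]; simp [h]))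
  have hstrict : ∑ t, lam t * (∑ j, w j * z t j) < ∑ t, lam t * c :=
    Finset.sum_lt_sum (fun t _ => hle t) ⟨t0, Finset.mem_univ t0, hlt⟩
  have hzero : ∑ t, lam t * (∑ j, w j * z t j) = 0 := by
    have : ∑ t, lam t * (∑ j, w j * z t j) = ∑ j, w j * (∑ t, lam t * z t j) := by
      simp_rw [Finset.mul_sum]
      rw [Finset.sum_comm]
      exact Finset.sum_congr rfl fun j _ => Finset.sum_congr rfl fun t _ => by ring
    rw [this]
    simp [hzsum]
  have hrhs : ∑ t, lam t * c = 0 := by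
    rw [← Finset.sum_mul, hlsum, zero_mul]
  rw [hzero, hrhs] at hstrict
  exact lt_irrefl 0 hstrict

end AffineLemmas

lemma exists_interp {d n : ℕ} (x : Fin n → Fin d → ℝ) (S : Fin (d + 1) → Finset (Fin n))
    (hsep : WellSeparable (fun t => x '' ↑(S t))) (y : Fin n → ℝ)
    (f : Fin (d + 1) → Fin n) (hf : ∀ t, f t ∈ S t) :
    ∃ β : (Fin d → ℝ) × ℝ, ∀ t, affEval β (x (f t)) = y (f t) := by
  classical
  set M : ((Fin d → ℝ) × ℝ) →ₗ[ℝ] (Fin (d + 1) → ℝ) :=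
    { toFun := fun β t => affEval β (x (f t))
      map_add' := by
        intro a b
        funext t
        simp only [affEval, Prod.fst_add, Prod.snd_add, Pi.add_apply, add_mul,
          Finset.sum_add_distrib]
        ring
      map_smul' := by
        intro c a
        funext t
        simp only [affEval, Prod.smul_fst, Prod.smul_snd, Pi.smul_apply, smul_eq_mul,
          RingHom.id_apply]
        rw [mul_add, Finset.mul_sum]
        congr 1
        exact Finset.sum_congr rfl (fun j _ => by ring) } with hM
  have hinj : Function.Injective M := by
    rw [← LinearMap.ker_eq_bot, LinearMap.ker_eq_bot']
    intro δ hδ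
    have hz : ∀ t, affEval δ (x (f t)) = 0 := fun t => congrFun hδ t
    exact lemA x S hsep δ
      (fun t => ⟨f t, hf t, (hz t).le⟩)
      (fun t => ⟨f t, hf t, (hz t).ge⟩)
  have hrank : Module.finrank ℝ ((Fin d → ℝ) × ℝ) = Module.finrank ℝ (Fin (d + 1) → ℝ) := by
    simp [Module.finrank_prod, Module.finrank_pi, Module.finrank_self]
  have hsurj : Function.Surjective M :=
    (LinearMap.injective_iff_surjective_of_finrank_eq_finrank hrank).mp hinj
  obtain ⟨β, hβ⟩ := hsurj (fun t => y (f t))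
  exact ⟨β, fun t => congrFun hβ t⟩

lemma unique_hyperplane {d n : ℕ} (x : Fin n → Fin d → ℝ) (S : Fin (d + 1) → Finset (Fin n))
    (hsep : WellSeparable (fun t => x '' ↑(S t))) (y : Fin n → ℝ)
    (β β' : (Fin d → ℝ) × ℝ) (κ : Fin (d + 1) → ℕ)
    (hκ : ∀ t, 1 ≤ κ t ∧ κ t ≤ (S t).card)
    (hb : ∀ t, kthSmallest (S t) (fun i => y i - affEval β (x i)) (κ t) = 0)
    (hb' : ∀ t, kthSmallest (S t) (fun i => y i - affEval β' (x i)) (κ t) = 0) :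
    β = β' := by
  have hδ : β' - β = 0 := by
    apply lemA x S hsep
    · intro t
      by_contra hcon
      push_neg at hcon
      have hlt := kth_lt_kth (S t) (fun i => y i - affEval β' (x i))
        (fun i => y i - affEval β (x i)) (κ t) (hκ t).1 (hκ t).2 ?_
      · rw [hb t, hb' t] at hlt
        exact lt_irrefl 0 hlt
      · intro i hi
        have := hcon i hi
        rw [affEval_sub] at this
        show y i - affEval β' (x i) < y i - affEval β (x i)
        linarith
    · intro t
      by_contra hcon
      push_neg at hcon
      have hlt := kth_lt_kth (S t) (fun i => y i - affEval β (x i))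
        (fun i => y i - affEval β' (x i)) (κ t) (hκ t).1 (hκ t).2 ?_
      · rw [hb t, hb' t] at hlt
        exact lt_irrefl 0 hlt
      · intro i hi
        have := hcon i hi
        rw [affEval_sub] at this
        show y i - affEval β (x i) < y i - affEval β' (x i)
        linarith
  have := sub_eq_zero.mp hδ
  exact this.symm

set_option maxHeartbeats 1000000 in
/-- Existence of resistant hyperplanes: for every vector `k` with `k t ∈ [|S t|]`, there
is an affine function making the `k t`-th smallest residual in each `S t` zero. -/
theorem stmt10 (d n : ℕ) (x : Fin n → Fin d → ℝ) (S : Fin (d + 1) → Finset (Fin n))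
    (hne : ∀ t, (S t).Nonempty)
    (hdisj : ∀ t t', t ≠ t' → Disjoint (S t) (S t'))
    (hsep : WellSeparable (fun t => x '' ↑(S t)))
    (y : Fin n → ℝ) (k : Fin (d + 1) → ℕ)
    (hk : ∀ t, 1 ≤ k t ∧ k t ≤ (S t).card) :
    ∃ β : (Fin d → ℝ) × ℝ,
      ∀ t, kthSmallest (S t) (fun i => y i - affEval β (x i)) (k t) = 0 := by
  classical
  have interp : ∀ f : Fin (d + 1) → Fin n, ∃ β : (Fin d → ℝ) × ℝ,
      (∀ t, f t ∈ S t) → ∀ t, affEval β (x (f t)) = y (f t) := by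
    intro f
    by_cases hf : ∀ t, f t ∈ S t
    · obtain ⟨β, hβ⟩ := exists_interp x S hsep y f hf
      exact ⟨β, fun _ => hβ⟩
    · exact ⟨0, fun h => absurd h hf⟩
  choose B hB using interp
  set Ψ : (Fin (d + 1) → Fin n) → (Fin (d + 1) → ℕ) := fun f t =>
    ((S t).filter (fun i => y i - affEval (B f) (x i) < 0)).card +
    ((S t).filter (fun i => y i - affEval (B f) (x i) = 0 ∧ i ≤ f t)).card with hΨdef
  set T : Finset (Fin (d + 1) → Fin n) := Fintype.piFinset S with hT
  set K : Finset (Fin (d + 1) → ℕ) := Fintype.piFinset (fun t => Finset.Icc 1 (S t).card)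
    with hK
  have hreal : ∀ f ∈ T, ∀ t, (1 ≤ Ψ f t ∧ Ψ f t ≤ (S t).card) ∧
      kthSmallest (S t) (fun i => y i - affEval (B f) (x i)) (Ψ f t) = 0 := by
    intro f hf t
    have hft : ∀ t, f t ∈ S t := fun t => (Fintype.mem_piFinset.mp hf) t
    have hzft : y (f t) - affEval (B f) (x (f t)) = 0 := by
      rw [hB f hft t]; ring
    have hmem : f t ∈ (S t).filter (fun i => y i - affEval (B f) (x i) = 0 ∧ i ≤ f t) :=
      Finset.mem_filter.mpr ⟨hft t, hzft, le_refl _⟩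
    have hpos : 1 ≤ ((S t).filter (fun i => y i - affEval (B f) (x i) = 0 ∧ i ≤ f t)).card :=
      Finset.card_pos.mpr ⟨f t, hmem⟩
    have hsub : (S t).filter (fun i => y i - affEval (B f) (x i) = 0 ∧ i ≤ f t) ⊆
        (S t).filter (fun i => y i - affEval (B f) (x i) = 0) := by
      intro i hi
      rw [Finset.mem_filter] at *
      exact ⟨hi.1, hi.2.1⟩
    have hdisj2 : Disjoint ((S t).filter (fun i => y i - affEval (B f) (x i) < 0))
        ((S t).filter (fun i => y i - affEval (B f) (x i) = 0)) := by
      rw [Finset.disjoint_left]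
      intro i h1 h2
      rw [Finset.mem_filter] at h1 h2
      rw [h2.2] at h1
      exact lt_irrefl 0 h1.2
    have hunion : (S t).filter (fun i => y i - affEval (B f) (x i) < 0) ∪
        (S t).filter (fun i => y i - affEval (B f) (x i) = 0)
        = (S t).filter (fun i => y i - affEval (B f) (x i) ≤ 0) := by
      ext i
      simp only [Finset.mem_union, Finset.mem_filter]
      constructor
      · rintro (⟨h1, h2⟩ | ⟨h1, h2⟩)
        · exact ⟨h1, h2.le⟩
        · exact ⟨h1, h2.le⟩
      · rintro ⟨h1, h2⟩
        rcases lt_or_eq_of_le h2 with h | h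
        · exact Or.inl ⟨h1, h⟩
        · exact Or.inr ⟨h1, h⟩
    have hΨeq : Ψ f t = ((S t).filter (fun i => y i - affEval (B f) (x i) < 0)).card +
        ((S t).filter (fun i => y i - affEval (B f) (x i) = 0 ∧ i ≤ f t)).card := rfl
    have hle0 : Ψ f t ≤ ((S t).filter (fun i => y i - affEval (B f) (x i) ≤ 0)).card := by
      rw [hΨeq, ← hunion, Finset.card_union_of_disjoint hdisj2]
      exact Nat.add_le_add_left (Finset.card_le_card hsub) _
    have hcardS : Ψ f t ≤ (S t).card :=
      le_trans hle0 (Finset.card_le_card (Finset.filter_subset _ _))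
    have h1Ψ : 1 ≤ Ψ f t := by rw [hΨeq]; omega
    have hlt0 : ((S t).filter (fun i => y i - affEval (B f) (x i) < 0)).card < Ψ f t := by
      rw [hΨeq]; omega
    exact ⟨⟨h1Ψ, hcardS⟩, kth_eq_zero (S t) _ (Ψ f t) hlt0 hle0⟩
  have hinj : Set.InjOn Ψ ↑T := by
    intro f hf f' hf' he
    have hfT : f ∈ T := hf
    have hf'T : f' ∈ T := hf'
    have hreal1 := hreal f hfT
    have hreal2 := hreal f' hf'T
    have hbeq : B f = B f' :=
      unique_hyperplane x S hsep y (B f) (B f') (Ψ f)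
        (fun t => (hreal1 t).1)
        (fun t => (hreal1 t).2)
        (fun t => by rw [congrFun he t]; exact (hreal2 t).2)
    funext t
    have heq := congrFun he t
    rw [hΨdef] at heq
    simp only at heq
    rw [← hbeq] at heq
    have hcard_eq := Nat.add_left_cancel heq
    have hft : ∀ t, f t ∈ S t := fun t => (Fintype.mem_piFinset.mp hfT) t
    have hf't : ∀ t, f' t ∈ S t := fun t => (Fintype.mem_piFinset.mp hf'T) t
    have hzf : y (f t) - affEval (B f) (x (f t)) = 0 := by rw [hB f hft t]; ring
    have hzf' : y (f' t) - affEval (B f) (x (f' t)) = 0 := by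
      rw [hbeq, hB f' hf't t]; ring
    rcases lt_trichotomy (f t) (f' t) with h | h | h
    · exfalso
      have hsub : (S t).filter (fun i => y i - affEval (B f) (x i) = 0 ∧ i ≤ f t) ⊆
          (S t).filter (fun i => y i - affEval (B f) (x i) = 0 ∧ i ≤ f' t) := by
        intro i hi
        rw [Finset.mem_filter] at *
        exact ⟨hi.1, hi.2.1, le_trans hi.2.2 h.le⟩
      have hss : (S t).filter (fun i => y i - affEval (B f) (x i) = 0 ∧ i ≤ f t) ⊂
          (S t).filter (fun i => y i - affEval (B f) (x i) = 0 ∧ i ≤ f' t) := by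
        rw [Finset.ssubset_iff_of_subset hsub]
        refine ⟨f' t, Finset.mem_filter.mpr ⟨hf't t, hzf', le_refl _⟩, ?_⟩
        intro hcon
        rw [Finset.mem_filter] at hcon
        exact absurd hcon.2.2 (not_le.mpr h)
      have := Finset.card_lt_card hss
      omega
    · exact h
    · exfalso
      have hsub : (S t).filter (fun i => y i - affEval (B f) (x i) = 0 ∧ i ≤ f' t) ⊆
          (S t).filter (fun i => y i - affEval (B f) (x i) = 0 ∧ i ≤ f t) := by
        intro i hi
        rw [Finset.mem_filter] at *
        exact ⟨hi.1, hi.2.1, le_trans hi.2.2 h.le⟩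
      have hss : (S t).filter (fun i => y i - affEval (B f) (x i) = 0 ∧ i ≤ f' t) ⊂
          (S t).filter (fun i => y i - affEval (B f) (x i) = 0 ∧ i ≤ f t) := by
        rw [Finset.ssubset_iff_of_subset hsub]
        refine ⟨f t, Finset.mem_filter.mpr ⟨hft t, hzf, le_refl _⟩, ?_⟩
        intro hcon
        rw [Finset.mem_filter] at hcon
        exact absurd hcon.2.2 (not_le.mpr h)
      have := Finset.card_lt_card hss
      omega
  have hsubK : Finset.image Ψ T ⊆ K := by
    intro v hv
    obtain ⟨f, hfT, rfl⟩ := Finset.mem_image.mp hv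
    rw [hK, Fintype.mem_piFinset]
    intro t
    rw [Finset.mem_Icc]
    exact (hreal f hfT t).1
  have hcardim : K.card ≤ (Finset.image Ψ T).card := by
    rw [Finset.card_image_of_injOn hinj, hT, hK, Fintype.card_piFinset,
      Fintype.card_piFinset]
    refine le_of_eq (Finset.prod_congr rfl (fun t _ => ?_))
    rw [Nat.card_Icc]
    omega
  have himage : Finset.image Ψ T = K := Finset.eq_of_subset_of_card_le hsubK hcardim
  have hkK : k ∈ K := by
    rw [hK, Fintype.mem_piFinset]
    intro t
    rw [Finset.mem_Icc]
    exact hk t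
  rw [← himage] at hkK
  obtain ⟨f, hfT, hfk⟩ := Finset.mem_image.mp hkK
  refine ⟨B f, fun t => ?_⟩
  rw [← hfk]
  exact (hreal f hfT t).2
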